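/- arXiv:2506.16321 — 6 statements merged into one kernel-verified Lean document; each statement's English description precedes it below -/
import Mathlib

section
/- Let n ∈ ℕ, d ∈ ℕ₀ and let V := ℝ[x₁,…,xₙ]_{≤d}. Let C ⊆ V be a cone (0 ∈ C and λ·C ⊆ C for all λ > 0) with nonempty interior, let S ⊆ V, and let l : V → ℝ be a linear functional such that l(p) > 0 for every nonzero p ∈ C and for every nonzero p in the closure of the convex conic hull of S. Fix f in the interior of C and define the linear operator A : V → V by Ap := l(p)·f. Then there exists τ > 0 such that e^{tA}S ⊆ C for all t ≥ τ. -/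
open MvPolynomial Module

/-- Operator exponential `e^A` of an endomorphism of a finite-dimensional real vector
space, `e^A = ∑_{k≥0} A^k/k!`, realized through the matrix exponential in a basis. -/
noncomputable def endExp {M : Type*} [AddCommGroup M] [Module ℝ M] [FiniteDimensional ℝ M]
    (A : Module.End ℝ M) : Module.End ℝ M :=
  (Matrix.toLin (Module.finBasis ℝ M) (Module.finBasis ℝ M))
    (NormedSpace.exp ((LinearMap.toMatrix (Module.finBasis ℝ M) (Module.finBasis ℝ M)) A))

/-- The interior of a subset of a finite-dimensional real vector space with respect to its
standard (unique Hausdorff vector space) topology, transported through coordinates. -/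
noncomputable def interiorIn {M : Type*} [AddCommGroup M] [Module ℝ M] [FiniteDimensional ℝ M]
    (C : Set M) : Set M :=
  (Module.finBasis ℝ M).equivFun ⁻¹' interior ((Module.finBasis ℝ M).equivFun '' C)

/-- The closure of a subset of a finite-dimensional real vector space with respect to its
standard topology, transported through coordinates. -/
noncomputable def closureIn {M : Type*} [AddCommGroup M] [Module ℝ M] [FiniteDimensional ℝ M]
    (C : Set M) : Set M :=
  (Module.finBasis ℝ M).equivFun ⁻¹' closure ((Module.finBasis ℝ M).equivFun '' C)

/-- The convex conic hull of a set: all finite nonnegative combinations of its elements. -/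
def conicHull {M : Type*} [AddCommGroup M] [Module ℝ M] (S : Set M) : Set M :=
  {v | ∃ (m : ℕ) (c : Fin m → ℝ) (s : Fin m → M),
    (∀ i, 0 ≤ c i) ∧ (∀ i, s i ∈ S) ∧ v = ∑ i, c i • s i}

open scoped Nat in
lemma exp_smul_idem {𝔸 : Type*} [NormedRing 𝔸] [NormedAlgebra ℝ 𝔸] [CompleteSpace 𝔸]
    (P : 𝔸) (hP : P * P = P) (μ : ℝ) :
    NormedSpace.exp (μ • P) = 1 + (Real.exp μ - 1) • P := by
  have hpow : ∀ k : ℕ, P ^ (k + 1) = P := by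
    intro k; induction k with
    | zero => simp
    | succ k ih => rw [pow_succ, ih, hP]
  have hsum : Summable fun k : ℕ => ((k ! : ℝ))⁻¹ • (μ • P) ^ k :=
    NormedSpace.expSeries_summable' (𝕂 := ℝ) (μ • P)
  have hre : Summable fun k : ℕ => μ ^ k / (k ! : ℝ) := Real.summable_pow_div_factorial μ
  have hre' : Summable fun k : ℕ => μ ^ (k + 1) / ((k + 1)! : ℝ) :=
    hre.comp_injective Nat.succ_injective
  rw [NormedSpace.exp_eq_tsum ℝ]
  show (∑' k : ℕ, ((k ! : ℝ))⁻¹ • (μ • P) ^ k) = _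
  rw [Summable.tsum_eq_zero_add hsum]
  have htail : ∀ k : ℕ, (((k + 1)! : ℝ))⁻¹ • (μ • P) ^ (k + 1)
      = (μ ^ (k + 1) / ((k + 1)! : ℝ)) • P := by
    intro k
    rw [smul_pow, hpow, smul_smul, div_eq_inv_mul]
  have hexp : Real.exp μ = ∑' k : ℕ, μ ^ k / (k ! : ℝ) := by
    rw [Real.exp_eq_exp_ℝ]
    exact congrFun (NormedSpace.exp_eq_tsum_div (𝔸 := ℝ)) μ
  have hexp' : ∑' k : ℕ, μ ^ (k + 1) / ((k + 1)! : ℝ) = Real.exp μ - 1 := by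
    rw [hexp, Summable.tsum_eq_zero_add hre]
    simp
  simp only [htail]
  rw [Summable.tsum_smul_const hre', hexp']
  simp

lemma endExp_formula {M : Type*} [AddCommGroup M] [Module ℝ M] [FiniteDimensional ℝ M]
    (A : Module.End ℝ M) (lf : ℝ) (hlf : lf ≠ 0) (hA2 : A * A = lf • A) (t : ℝ) :
    endExp (t • A) = LinearMap.id + ((Real.exp (t * lf) - 1) / lf) • A := by
  classical
  set B := Module.finBasis ℝ M
  set M0 := LinearMap.toMatrix B B A with hM0
  have hM2 : M0 * M0 = lf • M0 := by
    rw [hM0, ← LinearMap.toMatrix_mul, hA2, map_smul]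
  set P : Matrix (Fin (finrank ℝ M)) (Fin (finrank ℝ M)) ℝ := lf⁻¹ • M0 with hPdef
  have hP : P * P = P := by
    rw [hPdef, smul_mul_assoc, Matrix.mul_smul, hM2, smul_smul, smul_smul]
    congr 1
    field_simp
  have hMA : LinearMap.toMatrix B B (t • A) = (t * lf) • P := by
    rw [map_smul, hPdef, smul_smul, ← hM0]
    congr 1
    field_simp
  have hexp : NormedSpace.exp (LinearMap.toMatrix B B (t • A))
      = 1 + (Real.exp (t * lf) - 1) • P := by
    rw [hMA]
    letI : SeminormedRing (Matrix (Fin (finrank ℝ M)) (Fin (finrank ℝ M)) ℝ) :=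
      Matrix.linftyOpSemiNormedRing
    letI : NormedRing (Matrix (Fin (finrank ℝ M)) (Fin (finrank ℝ M)) ℝ) :=
      Matrix.linftyOpNormedRing
    letI : NormedAlgebra ℝ (Matrix (Fin (finrank ℝ M)) (Fin (finrank ℝ M)) ℝ) :=
      Matrix.linftyOpNormedAlgebra
    exact exp_smul_idem P hP (t * lf)
  rw [endExp, hexp, map_add, map_smul, hPdef, map_smul]
  congr 1
  · exact Matrix.toLin_one B
  · rw [show (Matrix.toLin B B) M0 = A from by rw [hM0, Matrix.toLin_toMatrix],
      smul_smul, div_eq_mul_inv]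

lemma main_aux {M : Type*} [AddCommGroup M] [Module ℝ M] [FiniteDimensional ℝ M] [Nontrivial M]
    (C S : Set M) (hC0 : (0 : M) ∈ C)
    (hCcone : ∀ lam : ℝ, 0 < lam → ∀ p ∈ C, lam • p ∈ C)
    (l : M →ₗ[ℝ] ℝ)
    (hlC : ∀ p ∈ C, p ≠ 0 → 0 < l p)
    (hlS : ∀ p ∈ closureIn (conicHull S), p ≠ 0 → 0 < l p)
    (f : M) (hf : f ∈ interiorIn C)
    (A : Module.End ℝ M) (hA : ∀ p, A p = l p • f) :
    ∃ τ : ℝ, 0 < τ ∧ ∀ t : ℝ, τ ≤ t → ∀ p ∈ S, endExp (t • A) p ∈ C := by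
  classical
  set φ := (Module.finBasis ℝ M).equivFun with hφdef
  have hφC : ∀ x : M, φ x ∈ φ '' C → x ∈ C := by
    rintro x ⟨y, hy, hxy⟩
    rwa [← φ.injective hxy]
  have hf' : φ f ∈ interior (φ '' C) := hf
  have hfC : f ∈ C := hφC f (interior_subset hf')
  obtain ⟨δ, hδ, hball⟩ : ∃ δ > 0, Metric.ball (φ f) δ ⊆ φ '' C := by
    rcases Metric.mem_nhds_iff.mp (mem_interior_iff_mem_nhds.mp hf') with ⟨δ, hδ, h⟩
    exact ⟨δ, hδ, h⟩
  have hCnear : ∀ q : M, ‖φ q - φ f‖ < δ → q ∈ C := by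
    intro q hq
    exact hφC q (hball (by rwa [Metric.mem_ball, dist_eq_norm]))
  -- f is nonzero
  have hf0 : f ≠ 0 := by
    intro hfz
    obtain ⟨w, hw⟩ := exists_ne (0 : M)
    have hφw : (0 : ℝ) < ‖φ w‖ :=
      norm_pos_iff.2 fun h => hw (φ.map_eq_zero_iff.mp h)
    set a : ℝ := (δ / 2) * ‖φ w‖⁻¹ with ha
    have ha0 : 0 < a := by positivity
    have hnq : ∀ s : ℝ, s = a ∨ s = -a → (s • w) ∈ C := by
      intro s hs
      apply hCnear
      have : φ (s • w) - φ f = s • φ w := by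
        rw [hfz, map_zero, map_smul, sub_zero]
      rw [this, norm_smul, Real.norm_eq_abs]
      have habs : |s| = a := by rcases hs with rfl | rfl <;> simp [abs_of_pos ha0]
      rw [habs, ha]
      calc δ / 2 * ‖φ w‖⁻¹ * ‖φ w‖ = δ / 2 := by field_simp
        _ < δ := by linarith
    have h1 : 0 < l (a • w) := by
      apply hlC _ (hnq a (Or.inl rfl))
      simp [smul_eq_zero, ha0.ne', hw]
    have h2 : 0 < l ((-a) • w) := by
      apply hlC _ (hnq (-a) (Or.inr rfl))
      simp [smul_eq_zero, ha0.ne', hw]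
    rw [neg_smul, map_neg] at h2
    linarith
  have hlf : 0 < l f := hlC f hfC hf0
  have hA2 : A * A = l f • A := by
    ext p
    simp [Module.End.mul_apply, hA, map_smul, smul_smul, mul_comm]
  -- the conic hull contains nonneg multiples of elements of S
  have hcone_mem : ∀ (c : ℝ), 0 ≤ c → ∀ p ∈ S, c • p ∈ conicHull S := by
    intro c hc p hp
    exact ⟨1, fun _ => c, fun _ => p, fun _ => hc, fun _ => hp, by simp⟩
  -- uniform lower bound on l over S
  obtain ⟨ε, hε, hεS⟩ : ∃ ε > 0, ∀ p ∈ S, ε * ‖φ p‖ ≤ l p := by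
    set T : Set (Fin (finrank ℝ M) → ℝ) :=
      Metric.sphere 0 1 ∩ closure (φ '' conicHull S) with hT
    have hTpos : ∀ x ∈ T, 0 < l (φ.symm x) := by
      intro x hx
      apply hlS
      · show φ (φ.symm x) ∈ closure (φ '' conicHull S)
        rw [φ.apply_symm_apply]
        exact hx.2
      · intro h0
        have hx0 : x = 0 := by
          rw [← φ.apply_symm_apply x, h0, map_zero]
        have := hx.1
        rw [hx0, mem_sphere_zero_iff_norm, norm_zero] at this
        linarith
    have hsphere : ∀ p ∈ S, p ≠ 0 → (‖φ p‖⁻¹ • φ p) ∈ T := by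
      intro p hp hp0
      have hn : 0 < ‖φ p‖ := norm_pos_iff.2 fun h => hp0 (φ.map_eq_zero_iff.mp h)
      constructor
      · rw [mem_sphere_zero_iff_norm, norm_smul, Real.norm_eq_abs,
          abs_of_pos (inv_pos.2 hn), inv_mul_cancel₀ hn.ne']
      · apply subset_closure
        refine ⟨‖φ p‖⁻¹ • p, hcone_mem _ (by positivity) p hp, ?_⟩
        rw [map_smul]
    rcases T.eq_empty_or_nonempty with hTe | hTne
    · refine ⟨1, one_pos, ?_⟩
      intro p hp
      rcases eq_or_ne p 0 with rfl | hp0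
      · simp
      · exact absurd (hsphere p hp hp0) (by rw [hTe]; exact Set.notMem_empty _)
    · have hcomp : IsCompact T := (isCompact_sphere 0 1).inter_right isClosed_closure
      have hcont : Continuous fun x : Fin (finrank ℝ M) → ℝ => l (φ.symm x) :=
        LinearMap.continuous_on_pi (l.comp φ.symm.toLinearMap)
      obtain ⟨x0, hx0T, hmin⟩ := hcomp.exists_isMinOn hTne hcont.continuousOn
      refine ⟨l (φ.symm x0), hTpos x0 hx0T, ?_⟩
      intro p hp
      rcases eq_or_ne p 0 with rfl | hp0
      · simp
      · have hn : 0 < ‖φ p‖ := norm_pos_iff.2 fun h => hp0 (φ.map_eq_zero_iff.mp h)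
        have h1 : l (φ.symm x0) ≤ ‖φ p‖⁻¹ * l p := by
          have h2 := hmin (hsphere p hp hp0)
          have hx' : φ.symm (‖φ p‖⁻¹ • φ p) = ‖φ p‖⁻¹ • p := by
            rw [map_smul, φ.symm_apply_apply]
          simpa [hx', map_smul, smul_eq_mul] using h2
        calc l (φ.symm x0) * ‖φ p‖ ≤ (‖φ p‖⁻¹ * l p) * ‖φ p‖ :=
              mul_le_mul_of_nonneg_right h1 (norm_nonneg _)
          _ = l p := by field_simp
  -- choose τ
  refine ⟨(l f)⁻¹ * Real.log (l f / (ε * δ) + 2), ?_, ?_⟩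
  · have harg : 1 < l f / (ε * δ) + 2 := by
      have : 0 < l f / (ε * δ) := by positivity
      linarith
    exact mul_pos (inv_pos.2 hlf) (Real.log_pos harg)
  · intro t ht p hp
    have hformula := endExp_formula A (l f) hlf.ne' hA2 t
    set c : ℝ := (Real.exp (t * l f) - 1) / l f with hc
    have happ : ∀ q : M, endExp (t • A) q = q + (c * l q) • f := by
      intro q
      rw [hformula]
      simp [hA, smul_smul]
    rcases eq_or_ne p 0 with rfl | hp0
    · rw [happ 0]
      simpa using hC0
    · have hn : 0 < ‖φ p‖ := norm_pos_iff.2 fun h => hp0 (φ.map_eq_zero_iff.mp h)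
      have hlp : 0 < l p := lt_of_lt_of_le (by positivity) (hεS p hp)
      have hexp_t : l f / (ε * δ) + 2 ≤ Real.exp (t * l f) := by
        have h1 : Real.log (l f / (ε * δ) + 2) ≤ t * l f := by
          have h2 := mul_le_mul_of_nonneg_left ht hlf.le
          rw [← mul_assoc, mul_inv_cancel₀ hlf.ne', one_mul] at h2
          linarith
        calc l f / (ε * δ) + 2 = Real.exp (Real.log (l f / (ε * δ) + 2)) :=
              (Real.exp_log (by positivity)).symm
          _ ≤ Real.exp (t * l f) := Real.exp_le_exp.2 h1
      have h1' : 1 < ε * δ * c := by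
        rw [hc]
        have hrw : ε * δ * ((Real.exp (t * l f) - 1) / l f)
            = ε * δ * (Real.exp (t * l f) - 1) / l f := by ring
        rw [hrw, lt_div_iff₀ hlf]
        have h3 : ε * δ * (l f / (ε * δ)) = l f := by field_simp
        nlinarith [mul_le_mul_of_nonneg_left hexp_t (mul_pos hε hδ).le, mul_pos hε hδ]
      have hcpos : 0 < c := by nlinarith [mul_pos hε hδ]
      have hrpos : 0 < c * l p := mul_pos hcpos hlp
      have hmem : f + (c * l p)⁻¹ • p ∈ C := by
        apply hCnear
        have heq : φ (f + (c * l p)⁻¹ • p) - φ f = (c * l p)⁻¹ • φ p := by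
          rw [map_add, map_smul]
          abel
        rw [heq, norm_smul, Real.norm_eq_abs, abs_of_pos (inv_pos.2 hrpos),
          inv_mul_lt_iff₀ hrpos]
        nlinarith [mul_le_mul_of_nonneg_left (hεS p hp) (mul_pos hδ hcpos).le,
          mul_lt_mul_of_pos_right h1' hn]
      have hC' := hCcone _ hrpos _ hmem
      have heq2 : (c * l p) • (f + (c * l p)⁻¹ • p) = p + (c * l p) • f := by
        rw [smul_add, smul_smul, mul_inv_cancel₀ hrpos.ne', one_smul]
        abel
      rw [happ p, ← heq2]
      exact hC'


theorem stmt_0 (n : ℕ) (hn : 0 < n) (d : ℕ)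
    (C S : Set (restrictTotalDegree (Fin n) ℝ d))
    (hC0 : (0 : restrictTotalDegree (Fin n) ℝ d) ∈ C)
    (hCcone : ∀ lam : ℝ, 0 < lam → ∀ p ∈ C, lam • p ∈ C)
    (hCint : (interiorIn C).Nonempty)
    (l : restrictTotalDegree (Fin n) ℝ d →ₗ[ℝ] ℝ)
    (hlC : ∀ p ∈ C, p ≠ 0 → 0 < l p)
    (hlS : ∀ p ∈ closureIn (conicHull S), p ≠ 0 → 0 < l p)
    (f : restrictTotalDegree (Fin n) ℝ d) (hf : f ∈ interiorIn C)
    (A : Module.End ℝ (restrictTotalDegree (Fin n) ℝ d))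
    (hA : ∀ p, A p = l p • f) :
    ∃ τ : ℝ, 0 < τ ∧ ∀ t : ℝ, τ ≤ t → ∀ p ∈ S, endExp (t • A) p ∈ C := by
  haveI : Nontrivial (restrictTotalDegree (Fin n) ℝ d) := by
    have h1 : (1 : MvPolynomial (Fin n) ℝ) ∈ restrictTotalDegree (Fin n) ℝ d :=
      (mem_restrictTotalDegree _ _ _).mpr (by simp [totalDegree_one])
    refine ⟨⟨⟨1, h1⟩, 0, ?_⟩⟩
    intro h
    rw [Submodule.mk_eq_zero] at h
    exact one_ne_zero h
  exact main_aux C S hC0 hCcone l hlC hlS f hf A hA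
end

section
/- Let n ∈ ℕ and let K ⊆ ℝⁿ be compact. Then there exists no bijective linear operator T : ℝ[x₁,…,xₙ] → ℝ[x₁,…,xₙ] such that T(Pos(K)) ⊆ Σℝ[x₁,…,xₙ]². -/
open MvPolynomial

/-- `Pos n K`: polynomials in `n` variables that are nonnegative on `K ⊆ ℝⁿ`. -/
def Pos (n : ℕ) (K : Set (Fin n → ℝ)) : Set (MvPolynomial (Fin n) ℝ) :=
  {p | ∀ x ∈ K, 0 ≤ eval x p}

/-- `SOS n`: finite sums of squares of polynomials in `n` variables. -/
def SOS (n : ℕ) : Set (MvPolynomial (Fin n) ℝ) :=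
  {p | ∃ (m : ℕ) (q : Fin m → MvPolynomial (Fin n) ℝ), p = ∑ i, q i ^ 2}

theorem stmt_7 (n : ℕ) (hn : 0 < n) (K : Set (Fin n → ℝ)) (hK : IsCompact K) :
    ¬ ∃ T : MvPolynomial (Fin n) ℝ →ₗ[ℝ] MvPolynomial (Fin n) ℝ,
        Function.Bijective T ∧ T '' Pos n K ⊆ SOS n := by
  classical
  rintro ⟨T, ⟨hinj, hsurj⟩, hT⟩
  set i0 : Fin n := ⟨0, hn⟩ with hi0
  set u : MvPolynomial (Fin n) ℝ := T 1 with hu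
  set q0 : Polynomial ℝ :=
    MvPolynomial.aeval (fun i => if i = i0 then Polynomial.X else 0) u with hq0
  set m : ℕ := q0.natDegree + 1 with hm
  obtain ⟨f, hf⟩ := hsurj (-(X i0 ^ (2 * m)))
  -- bound f on K
  obtain ⟨C, hC⟩ := hK.exists_bound_of_continuousOn
    ((MvPolynomial.continuous_eval f).continuousOn)
  have hpos : (C • (1 : MvPolynomial (Fin n) ℝ) + f) ∈ Pos n K := by
    intro x hx
    have h1 : ‖eval x f‖ ≤ C := hC x hx
    have h2 : -C ≤ eval x f := neg_le_of_abs_le (by simpa [Real.norm_eq_abs] using h1)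
    rw [map_add, MvPolynomial.smul_eq_C_mul, map_mul, eval_C, map_one]
    linarith
  have hsos : T (C • 1 + f) ∈ SOS n := hT ⟨_, hpos, rfl⟩
  have hTval : T (C • 1 + f) = C • u - X i0 ^ (2 * m) := by
    rw [map_add, map_smul, hf]
    ring
  -- nonnegativity everywhere
  have hnn : ∀ x : Fin n → ℝ, 0 ≤ eval x (C • u - X i0 ^ (2 * m)) := by
    intro x
    rw [← hTval]
    obtain ⟨k, q, hqeq⟩ := hsos
    rw [hqeq, map_sum]
    exact Finset.sum_nonneg fun i _ => by rw [map_pow]; positivity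
  -- univariate translation
  have key : ∀ t : ℝ, Polynomial.eval t (Polynomial.X ^ (2 * m) - C • q0) ≤ 0 := by
    intro t
    have hx := hnn (fun i => if i = i0 then t else 0)
    have heq : MvPolynomial.eval (fun i => if i = i0 then t else 0) u
        = Polynomial.eval t q0 := by
      rw [hq0, ← Polynomial.coe_aeval_eq_eval,
        MvPolynomial.comp_aeval_apply (f := fun i => if i = i0 then Polynomial.X else 0)
          (Polynomial.aeval t) u]
      simp only [apply_ite (Polynomial.aeval t), Polynomial.aeval_X, map_zero]
      rw [MvPolynomial.aeval_def, Algebra.algebraMap_self]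
      rfl
    simp only [map_sub, map_smul, map_pow, MvPolynomial.eval_X, if_pos rfl,
      smul_eq_mul] at hx
    simp only [Polynomial.eval_sub, Polynomial.eval_pow, Polynomial.eval_X,
      Polynomial.eval_smul, smul_eq_mul]
    rw [← heq]
    simpa using hx
  -- degree facts
  set r : Polynomial ℝ := Polynomial.X ^ (2 * m) - C • q0 with hr
  have hdegs : (C • q0).degree < (Polynomial.X ^ (2 * m) : Polynomial ℝ).degree := by
    rw [Polynomial.degree_X_pow]
    calc (C • q0).degree ≤ q0.degree := Polynomial.degree_smul_le C q0
      _ ≤ (q0.natDegree : WithBot ℕ) := Polynomial.degree_le_natDegree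
      _ < (2 * m : ℕ) := by exact_mod_cast by omega
  have hdeg : r.degree = (2 * m : ℕ) := by
    rw [hr, Polynomial.degree_sub_eq_left_of_degree_lt hdegs, Polynomial.degree_X_pow]
  have hlead : r.leadingCoeff = 1 := by
    have hnd : r.natDegree = 2 * m := Polynomial.natDegree_eq_of_degree_eq_some hdeg
    rw [Polynomial.leadingCoeff, hnd, hr, Polynomial.coeff_sub, Polynomial.coeff_X_pow,
      if_pos rfl]
    have : (C • q0).coeff (2 * m) = 0 := by
      apply Polynomial.coeff_eq_zero_of_degree_lt
      simpa using hdegs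
    rw [this]; ring
  have htend := Polynomial.tendsto_atTop_of_leadingCoeff_nonneg r
    (by rw [hdeg]; exact_mod_cast by omega) (by rw [hlead]; norm_num)
  obtain ⟨t, ht⟩ := (htend.eventually (Filter.eventually_ge_atTop 1)).exists
  have := key t
  linarith
end

section
/- Let n ∈ ℕ and let A : ℝ[x₁,…,xₙ] → ℝ[x₁,…,xₙ] be a linear operator. The following are equivalent: (a) for every multi-index α ∈ ℕ₀ⁿ one has sup_{k∈ℕ₀} totalDegree(Aᵏ x^α) < ∞, i.e., there exists D ∈ ℕ₀ with totalDegree(Aᵏ x^α) ≤ D for all k ∈ ℕ₀; (b) there exists a sequence (V_i)_{i∈ℕ₀} of subspaces of ℝ[x₁,…,xₙ] such that each V_i is finite-dimensional, ⋃_{i∈ℕ₀} V_i = ℝ[x₁,…,xₙ], and A V_i ⊆ V_i for all i ∈ ℕ₀. -/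
open MvPolynomial

/-- Every finite-dimensional submodule of the polynomial ring has bounded total degree. -/
lemma fd_bounded_degree {n : ℕ} (V : Submodule ℝ (MvPolynomial (Fin n) ℝ))
    (hV : FiniteDimensional ℝ V) :
    ∃ D : ℕ, ∀ p ∈ V, p.totalDegree ≤ D := by
  have hfg : V.FG := (Submodule.fg_iff_finiteDimensional V).mpr hV
  obtain ⟨s, hs⟩ := hfg
  refine ⟨s.sup MvPolynomial.totalDegree, ?_⟩
  intro p hp
  rw [← hs] at hp
  induction hp using Submodule.span_induction with
  | mem x hx => exact Finset.le_sup hx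
  | zero => simp
  | add x y _ _ hx hy =>
    exact (MvPolynomial.totalDegree_add x y).trans (max_le hx hy)
  | smul a x _ hx => exact (MvPolynomial.totalDegree_smul_le a x).trans hx

theorem stmt_8 (n : ℕ) (hn : 0 < n)
    (A : Module.End ℝ (MvPolynomial (Fin n) ℝ)) :
    (∀ α : Fin n →₀ ℕ, ∃ D : ℕ, ∀ k : ℕ,
        ((A ^ k) (monomial α (1 : ℝ))).totalDegree ≤ D) ↔
    (∃ V : ℕ → Submodule ℝ (MvPolynomial (Fin n) ℝ),
        (∀ i, FiniteDimensional ℝ (V i)) ∧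
        (⋃ i, (V i : Set (MvPolynomial (Fin n) ℝ))) = Set.univ ∧
        (∀ i, ∀ p ∈ V i, A p ∈ V i)) := by
  constructor
  · intro h
    choose D hD using h
    -- generating set for V i
    set c : ℕ → (Fin n →₀ ℕ) := fun i => Finsupp.equivFunOnFinite.symm (fun _ => i) with hc
    set G : ℕ → Set (MvPolynomial (Fin n) ℝ) := fun i =>
      ⋃ α ∈ Finset.Iic (c i), Set.range (fun k : ℕ => (A ^ k) (monomial α (1 : ℝ))) with hG
    refine ⟨fun i => Submodule.span ℝ (G i), ?_, ?_, ?_⟩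
    · intro i
      set N : ℕ := (Finset.Iic (c i)).sup D with hN
      have hle : Submodule.span ℝ (G i) ≤ restrictTotalDegree (Fin n) ℝ N := by
        rw [Submodule.span_le]
        intro p hp
        simp only [hG, Set.mem_iUnion] at hp
        obtain ⟨α, hα, k, rfl⟩ := hp
        simp only [SetLike.mem_coe, mem_restrictTotalDegree]
        exact (hD α k).trans (Finset.le_sup hα)
      exact Submodule.finiteDimensional_of_le hle
    · ext p
      simp only [Set.mem_univ, iff_true, Set.mem_iUnion, SetLike.mem_coe]
      refine ⟨p.totalDegree, ?_⟩
      have key : ∑ α ∈ p.support, monomial α (p.coeff α) ∈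
          Submodule.span ℝ (G p.totalDegree) := by
        refine Submodule.sum_mem _ (fun α hα => ?_)
        have hmem : monomial α (1 : ℝ) ∈ G p.totalDegree := by
          simp only [hG, Set.mem_iUnion]
          refine ⟨α, ?_, 0, by simp⟩
          simp only [Finset.mem_Iic, hc]
          intro j
          have h1 : α j ≤ α.sum fun _ e => e := by
            rcases eq_or_ne (α j) 0 with h | h
            · simp [h]
            · exact Finset.single_le_sum (fun _ _ => Nat.zero_le _)
                (Finsupp.mem_support_iff.mpr h)
          simpa using h1.trans (MvPolynomial.le_totalDegree (s := α) hα)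
        have : monomial α (p.coeff α) = p.coeff α • monomial α (1 : ℝ) := by
          simp [smul_monomial]
        rw [this]
        exact Submodule.smul_mem _ _ (Submodule.subset_span hmem)
      simpa [p.support_sum_monomial_coeff] using key
    · intro i p hp
      induction hp using Submodule.span_induction with
      | mem x hx =>
        refine Submodule.subset_span ?_
        simp only [hG, Set.mem_iUnion] at hx ⊢
        obtain ⟨α, hα, k, rfl⟩ := hx
        refine ⟨α, hα, k + 1, ?_⟩
        show (A ^ (k + 1)) _ = A ((A ^ k) _)
        rw [pow_succ', Module.End.mul_apply]
      | zero => simp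
      | add x y _ _ hx hy => rw [map_add]; exact Submodule.add_mem _ hx hy
      | smul a x _ hx => rw [map_smul]; exact Submodule.smul_mem _ _ hx
  · rintro ⟨V, hfd, hcov, hinv⟩
    intro α
    have : (monomial α (1 : ℝ)) ∈ ⋃ i, (V i : Set (MvPolynomial (Fin n) ℝ)) := by
      rw [hcov]; trivial
    obtain ⟨i, hi⟩ := Set.mem_iUnion.mp this
    obtain ⟨Dd, hDd⟩ := fd_bounded_degree (V i) (hfd i)
    refine ⟨Dd, fun k => ?_⟩
    apply hDd
    induction k with
    | zero => simpa using hi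
    | succ k ih =>
      rw [pow_succ', Module.End.mul_apply]
      exact hinv i _ ih
end

section
/- Let n ∈ ℕ, let K ⊆ ℝⁿ be compact, and let T : ℝ[x₁,…,xₙ] → ℝ[x₁,…,xₙ] be a bijective linear operator. Then there exist p ∈ Pos(K) and a constant c > 0 such that c − p ∈ Pos(K) and totalDegree(Tp) > totalDegree(T(1)). -/
open MvPolynomial

theorem stmt_14 (n : ℕ) (hn : 0 < n) (K : Set (Fin n → ℝ)) (hK : IsCompact K)
    (T : MvPolynomial (Fin n) ℝ →ₗ[ℝ] MvPolynomial (Fin n) ℝ)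
    (hT : Function.Bijective T) :
    ∃ (p : MvPolynomial (Fin n) ℝ) (c : ℝ), 0 < c ∧ p ∈ Pos n K ∧
      C c - p ∈ Pos n K ∧ (T 1).totalDegree < (T p).totalDegree := by
  set d := (T 1).totalDegree with hd
  set V := MvPolynomial.restrictTotalDegree (Fin n) ℝ d with hV
  set S := V.comap T with hSdef
  have hS : S ≠ ⊤ := by
    intro htop
    have hmem : ∀ x, T x ∈ V := by
      intro x
      have : x ∈ S := htop ▸ Submodule.mem_top
      exact this
    have hfd : FiniteDimensional ℝ (MvPolynomial (Fin n) ℝ) := by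
      exact FiniteDimensional.of_injective (T.codRestrict V hmem)
        (fun a b hab => hT.injective (by simpa using congrArg Subtype.val hab))
    have : Nonempty (Fin n) := ⟨⟨0, hn⟩⟩
    have hfin := FiniteDimensional.fintypeBasisIndex (basisMonomials (Fin n) ℝ)
    have : Finite ((Fin n) →₀ ℕ) := ⟨hfin.equivFin⟩
    exact not_finite ((Fin n) →₀ ℕ)
  obtain ⟨q, hq⟩ : ∃ q, q ∉ S := by
    by_contra h
    push_neg at h
    exact hS (Submodule.eq_top_iff'.mpr h)
  obtain ⟨B, hB⟩ := hK.exists_bound_of_continuousOn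
    (f := fun x => eval x q) (MvPolynomial.continuous_eval q).continuousOn
  set M := max B 0 with hM
  have hMnn : 0 ≤ M := le_max_right _ _
  have hbound : ∀ x ∈ K, |eval x q| ≤ M := fun x hx =>
    (hB x hx).trans (le_max_left _ _)
  refine ⟨q + C (M + 1), 2 * M + 1, by linarith, ?_, ?_, ?_⟩
  · intro x hx
    have := (abs_le.mp (hbound x hx)).1
    simp only [map_add, eval_C]
    linarith
  · intro x hx
    have := (abs_le.mp (hbound x hx)).2
    simp only [map_sub, map_add, eval_C]
    linarith
  · have h1 : (1 : MvPolynomial (Fin n) ℝ) ∈ S := by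
      simp only [hSdef, Submodule.mem_comap, hV, mem_restrictTotalDegree]
      exact le_rfl
    have hC : C (M + 1) ∈ S := by
      have : C (M + 1) = (M + 1) • (1 : MvPolynomial (Fin n) ℝ) := by
        simp [smul_eq_C_mul]
      rw [this]
      exact S.smul_mem _ h1
    have hp : q + C (M + 1) ∉ S := fun h => hq (by simpa using S.sub_mem h hC)
    have : ¬ (T (q + C (M + 1))).totalDegree ≤ d := by
      intro h
      exact hp ((Submodule.mem_comap).mpr ((mem_restrictTotalDegree _ _ _).mpr h))
    omega
end

section
/- Let n ∈ ℕ and let p ∈ ℝ[x₁,…,xₙ] satisfy p(x) ≥ 0 for all x ∈ ℝⁿ. Then the homogeneous component of p of degree totalDegree(p) is also nonnegative on all of ℝⁿ. -/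
open MvPolynomial

lemma eval_smul_of_isHomogeneous {n : ℕ} {q : MvPolynomial (Fin n) ℝ} {d : ℕ}
    (hq : q.IsHomogeneous d) (t : ℝ) (x : Fin n → ℝ) :
    eval (t • x) q = t ^ d * eval x q := by
  rw [eval_eq', eval_eq', Finset.mul_sum]
  apply Finset.sum_congr rfl
  intro m hm
  rw [mem_support_iff] at hm
  have hdeg : (∑ i, m i) = d := by
    have := hq hm
    rw [← this, Finsupp.weight_apply]
    simp only [Finsupp.sum, Pi.one_apply, smul_eq_mul, mul_one]
    rw [Finset.sum_subset (Finset.subset_univ m.support)]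
    intro i _ hi
    simpa using Finsupp.notMem_support_iff.mp hi
  calc coeff m q * ∏ i, (t • x) i ^ m i
      = coeff m q * ∏ i, (t ^ m i * x i ^ m i) := by
        simp [mul_pow]
    _ = coeff m q * (t ^ (∑ i, m i) * ∏ i, x i ^ m i) := by
        rw [Finset.prod_mul_distrib, Finset.prod_pow_eq_pow_sum]
    _ = t ^ d * (coeff m q * ∏ i, x i ^ m i) := by rw [hdeg]; ring

theorem stmt_15 (n : ℕ) (hn : 0 < n) (p : MvPolynomial (Fin n) ℝ)
    (hp : ∀ x : Fin n → ℝ, 0 ≤ eval x p) :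
    ∀ x : Fin n → ℝ, 0 ≤ eval x (homogeneousComponent p.totalDegree p) := by
  intro x
  by_contra hc
  push_neg at hc
  set D := p.totalDegree with hD
  set c : ℝ := eval x (homogeneousComponent D p) with hcdef
  set q : Polynomial ℝ := ∑ i ∈ Finset.range (D + 1),
      Polynomial.C (eval x (homogeneousComponent i p)) * Polynomial.X ^ i with hqdef
  have hqeval : ∀ t : ℝ, q.eval t = eval (t • x) p := by
    intro t
    conv_rhs => rw [← sum_homogeneousComponent p]
    rw [hqdef]
    simp only [map_sum, Polynomial.eval_finset_sum, Polynomial.eval_mul, Polynomial.eval_C,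
      Polynomial.eval_pow, Polynomial.eval_X]
    apply Finset.sum_congr rfl
    intro i _
    rw [eval_smul_of_isHomogeneous (homogeneousComponent_isHomogeneous i p) t x]
    ring
  have hqnonneg : ∀ t : ℝ, 0 ≤ q.eval t := fun t => (hqeval t).symm ▸ hp (t • x)
  have hcoeff : q.coeff D = c := by
    rw [hqdef]
    rw [Polynomial.finset_sum_coeff]
    rw [Finset.sum_eq_single D]
    · simp [hcdef]
    · intro i _ hi
      simp [Polynomial.coeff_C_mul, Polynomial.coeff_X_pow, Ne.symm hi]
    · intro h
      exact absurd (Finset.self_mem_range_succ D) h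
  have hcne : q.coeff D ≠ 0 := by rw [hcoeff]; exact ne_of_lt hc
  have hndle : q.natDegree ≤ D := by
    apply Polynomial.natDegree_sum_le_of_forall_le
    intro i hi
    refine le_trans (Polynomial.natDegree_C_mul_le _ _) ?_
    simpa using Nat.lt_succ_iff.mp (Finset.mem_range.mp hi)
  have hnd : q.natDegree = D := le_antisymm hndle (Polynomial.le_natDegree_of_ne_zero hcne)
  have hlead : q.leadingCoeff = c := by rw [Polynomial.leadingCoeff, hnd, hcoeff]
  rcases Nat.eq_zero_or_pos D with hD0 | hDpos
  · -- D = 0 : q = C c, and q.eval 1 = c ≥ 0, contradiction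
    have := hqnonneg 1
    have h1 : q.eval 1 = c := by
      rw [hqdef, hD0]
      simp [hcdef, hD0]
    linarith [h1 ▸ this]
  · have hdeg : 0 < q.degree := by
      rw [Polynomial.degree_eq_natDegree (fun h => hcne (by simp [h])), hnd]
      exact_mod_cast hDpos
    have htend := Polynomial.tendsto_atBot_of_leadingCoeff_nonpos q hdeg (hlead ▸ hc.le)
    obtain ⟨t, ht⟩ := (htend.eventually (Filter.eventually_le_atBot (-1))).exists
    linarith [hqnonneg t]
end

section
/- Define linear operators A, B : ℝ[x] → ℝ[x] on the monomial basis by A x^k := x^k for even k and A x^k := x^{k+1} for odd k, and B x^k := x^{k+1} for even k and B x^k := x^k for odd k, and set C := A∘B − B∘A. Then C x^{2m} = x^{2m+2} − x^{2m+1} and C x^{2m+1} = x^{2m+2} − x^{2m+3} for all m ∈ ℕ₀, and for every k ≥ 1 the polynomial Cᵏ(1) has degree exactly 2k; in particular there is no D ∈ ℕ₀ with deg(Cᵏ(1)) ≤ D for all k ∈ ℕ₀. -/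
open Polynomial

theorem stmt_18 (A B : Module.End ℝ (Polynomial ℝ))
    (hA : ∀ k : ℕ, A (X ^ k) = if Even k then X ^ k else X ^ (k + 1))
    (hB : ∀ k : ℕ, B (X ^ k) = if Even k then X ^ (k + 1) else X ^ k) :
    (∀ m : ℕ, (A * B - B * A) (X ^ (2 * m)) = X ^ (2 * m + 2) - X ^ (2 * m + 1)) ∧
    (∀ m : ℕ, (A * B - B * A) (X ^ (2 * m + 1)) = X ^ (2 * m + 2) - X ^ (2 * m + 3)) ∧
    (∀ k : ℕ, 1 ≤ k → (((A * B - B * A) ^ k) 1).natDegree = 2 * k) ∧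
    (¬ ∃ D : ℕ, ∀ k : ℕ, (((A * B - B * A) ^ k) 1).natDegree ≤ D) := by
  set L := A * B - B * A with hL
  have hLpow : ∀ n : ℕ, L (X ^ n : ℝ[X]) =
      if Even n then X ^ (n + 2) - X ^ (n + 1) else X ^ (n + 1) - X ^ (n + 2) := by
    intro n
    rcases Nat.even_or_odd n with he | ho
    · have h1 : ¬ Even (n + 1) := by simp [Nat.even_add_one, he]
      simp only [hL, LinearMap.sub_apply, Module.End.mul_apply, hA, hB,
        if_pos he, if_neg h1]
    · have h0 : ¬ Even n := Nat.not_even_iff_odd.mpr ho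
      have h1 : Even (n + 1) := by simpa [Nat.even_add_one] using h0
      simp only [hL, LinearMap.sub_apply, Module.End.mul_apply, hA, hB,
        if_neg h0, if_pos h1]
  have hdeg : ∀ q : ℝ[X], (L q).natDegree ≤ q.natDegree + 2 := by
    intro q
    conv_lhs => rw [q.as_sum_support_C_mul_X_pow, map_sum]
    refine Polynomial.natDegree_sum_le_of_forall_le _ _ ?_
    intro i hi
    have hi' : i ≤ q.natDegree := le_natDegree_of_mem_supp i hi
    rw [← Polynomial.smul_eq_C_mul, map_smul]
    refine (Polynomial.natDegree_smul_le _ _).trans ?_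
    rw [hLpow i]
    split_ifs
    · refine (Polynomial.natDegree_sub_le _ _).trans ?_
      simp only [natDegree_X_pow]
      omega
    · refine (Polynomial.natDegree_sub_le _ _).trans ?_
      simp only [natDegree_X_pow]
      omega
  have key : ∀ k : ℕ, ∃ p : ℝ[X], (L ^ (k + 1)) 1 = X ^ (2 * (k + 1)) + p ∧
      p.natDegree < 2 * (k + 1) := by
    intro k
    induction k with
    | zero =>
        refine ⟨-X, ?_, ?_⟩
        · have : (L ^ 1) (1 : ℝ[X]) = L (X ^ 0) := by simp
          rw [this, hLpow 0]
          norm_num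
          ring
        · simp
    | succ n ih =>
        obtain ⟨p, hp, hpd⟩ := ih
        refine ⟨-X ^ (2 * n + 3) + L p, ?_, ?_⟩
        · have : (L ^ (n + 1 + 1)) (1 : ℝ[X]) = L ((L ^ (n + 1)) 1) := by
            rw [pow_succ']
            rfl
          rw [this, hp, map_add, hLpow (2 * (n + 1))]
          rw [if_pos (by exact even_two_mul (n+1))]
          ring_nf
        · have h1 : (L p).natDegree ≤ p.natDegree + 2 := hdeg p
          refine (Polynomial.natDegree_add_le _ _).trans_lt ?_
          have : (-X ^ (2 * n + 3) : ℝ[X]).natDegree = 2 * n + 3 := by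
            simp
          omega
  have hdegk : ∀ k : ℕ, 1 ≤ k → ((L ^ k) (1 : ℝ[X])).natDegree = 2 * k := by
    intro k hk
    obtain ⟨j, rfl⟩ := Nat.exists_eq_add_of_le hk
    obtain ⟨p, hp, hpd⟩ := key j
    rw [add_comm 1 j, hp]
    rw [Polynomial.natDegree_add_eq_left_of_natDegree_lt (by simpa using hpd)]
    simp
  refine ⟨?_, ?_, hdegk, ?_⟩
  · intro m
    rw [hLpow, if_pos (even_two_mul m)]
  · intro m
    have : ¬ Even (2 * m + 1) := by simp [Nat.even_add_one]
    rw [hLpow, if_neg this]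
  · rintro ⟨D, hD⟩
    have h1 := hD (D + 1)
    rw [hdegk (D + 1) (by omega)] at h1
    omega
end
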